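/- Let d ≥ 1, let N : ℝ^d → ℝ be a norm (N(x) ≥ 0 with equality iff x = 0, N(c·x) = |c| N(x), N(x+y) ≤ N(x) + N(y)), and let ℓ, u > 0 satisfy ℓ·N(x) ≤ ‖x‖∞ ≤ u·N(x) for all x, where ‖x‖∞ := max_i |x_i|. Suppose M(x) := N(x)²/2 is Fréchet differentiable on ℝ^d. Let γ̄ ∈ [0,1), let F̄ : ℝ^d → ℝ^d satisfy ‖F̄(x) − F̄(y)‖∞ ≤ γ̄ ‖x − y‖∞ for all x, y, and let Q* be a fixed point of F̄. Then for every Q ∈ ℝ^d, the Fréchet derivative of M at Q − Q* evaluated at the direction F̄(Q) − Q satisfies DM(Q − Q*)[F̄(Q) − Q] ≤ −2 (1 − (u/ℓ) γ̄) M(Q − Q*). -/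

import Mathlib

section aux

variable {d : ℕ} (N : (Fin d → ℝ) → ℝ)

/-- Euler identity for the 2-homogeneous function `f = N²/2`. -/
lemma euler_aux
    (hNsmul : ∀ (c : ℝ) (x : Fin d → ℝ), N (c • x) = |c| * N x)
    (hdiff : Differentiable ℝ (fun x : Fin d → ℝ => N x ^ 2 / 2))
    (x : Fin d → ℝ) :
    fderiv ℝ (fun x : Fin d → ℝ => N x ^ 2 / 2) x x = 2 * (N x ^ 2 / 2) := by
  set f : (Fin d → ℝ) → ℝ := fun x => N x ^ 2 / 2 with hf
  have hcurve : HasDerivAt (fun t : ℝ => t • x) ((1:ℝ) • x) 1 :=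
    (hasDerivAt_id 1).smul_const x
  have h1' : HasDerivAt (f ∘ fun t : ℝ => t • x) (fderiv ℝ f ((1:ℝ) • x) ((1:ℝ) • x)) 1 :=
    (hdiff ((1:ℝ) • x)).hasFDerivAt.comp_hasDerivAt 1 hcurve
  have h1 : HasDerivAt (fun t : ℝ => f (t • x)) (fderiv ℝ f x x) 1 := by
    simp only [one_smul] at h1'; exact h1'
  have heq : (fun t : ℝ => f (t • x)) = fun t : ℝ => t ^ 2 * f x := by
    funext t
    simp only [hf]
    rw [hNsmul t x]
    rw [mul_pow, sq_abs]
    ring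
  have h2 : HasDerivAt (fun t : ℝ => t ^ 2 * f x) (2 * f x) 1 := by
    have := (hasDerivAt_pow 2 (1:ℝ)).mul_const (f x)
    simpa using this
  rw [heq] at h1
  exact h1.unique h2

/-- Bound on the derivative of `f = N²/2`: `Df(x)[v] ≤ N x * N v`. -/
lemma deriv_bound_aux
    (hN0 : ∀ x, 0 ≤ N x)
    (hNsmul : ∀ (c : ℝ) (x : Fin d → ℝ), N (c • x) = |c| * N x)
    (hNadd : ∀ x y : Fin d → ℝ, N (x + y) ≤ N x + N y)
    (hdiff : Differentiable ℝ (fun x : Fin d → ℝ => N x ^ 2 / 2))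
    (x v : Fin d → ℝ) :
    fderiv ℝ (fun x : Fin d → ℝ => N x ^ 2 / 2) x v ≤ N x * N v := by
  set f : (Fin d → ℝ) → ℝ := fun x => N x ^ 2 / 2 with hf
  have hcurve : HasDerivAt (fun t : ℝ => x + t • v) ((1:ℝ) • v) 0 :=
    (((hasDerivAt_id (0:ℝ)).smul_const v).const_add x)
  have h1 : HasDerivAt (fun t : ℝ => f (x + t • v)) (fderiv ℝ f (x + (0:ℝ) • v) ((1:ℝ) • v)) 0 :=
    (hdiff _).hasFDerivAt.comp_hasDerivAt 0 hcurve
  simp only [zero_smul, add_zero, one_smul] at h1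
  -- φ t = (N x + t * N v)^2 / 2
  have h2 : HasDerivAt (fun t : ℝ => (N x + t * N v) ^ 2 / 2) (N x * N v) 0 := by
    have hin : HasDerivAt (fun t : ℝ => N x + t * N v) (N v) 0 :=
      ((hasDerivAt_id (0:ℝ)).mul_const (N v)).const_add (N x) |>.congr_deriv (by simp)
    have h := (hin.pow 2).div_const 2
    refine h.congr_deriv ?_
    push_cast
    ring
  -- g := f(x + t v) - φ(t), g' = Df(x)v - N x N v, g ≤ 0 on Ioi 0, g 0 = 0
  set L : ℝ := fderiv ℝ f x v with hL
  have hg : HasDerivAt (fun t : ℝ => f (x + t • v) - (N x + t * N v) ^ 2 / 2)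
      (L - N x * N v) 0 := h1.sub h2
  have hg0 : (fun t : ℝ => f (x + t • v) - (N x + t * N v) ^ 2 / 2) 0 = 0 := by
    simp [hf]
  have hle : ∀ t : ℝ, 0 < t → f (x + t • v) - (N x + t * N v) ^ 2 / 2 ≤ 0 := by
    intro t ht
    have h3 : N (x + t • v) ≤ N x + t * N v := by
      calc N (x + t • v) ≤ N x + N (t • v) := hNadd x (t • v)
        _ = N x + t * N v := by rw [hNsmul, abs_of_pos ht]
    have h4 : N (x + t • v) ^ 2 ≤ (N x + t * N v) ^ 2 :=
      pow_le_pow_left₀ (hN0 _) h3 2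
    simp only [hf]
    linarith
  -- right-derivative comparison
  have hdiffset : Set.Ioi (0:ℝ) \ {0} = Set.Ioi 0 :=
    Set.diff_singleton_eq_self (by simp)
  have hgw := (hg.hasDerivWithinAt (s := Set.Ioi (0:ℝ)))
  rw [hasDerivWithinAt_iff_tendsto_slope, hdiffset] at hgw
  have hslope : ∀ᶠ t in nhdsWithin (0:ℝ) (Set.Ioi 0),
      slope (fun t : ℝ => f (x + t • v) - (N x + t * N v) ^ 2 / 2) 0 t ≤ 0 := by
    filter_upwards [self_mem_nhdsWithin] with t ht1
    rw [slope_def_field]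
    have h0 : f (x + (0:ℝ) • v) - (N x + 0 * N v) ^ 2 / 2 = 0 := by simp [hf]
    rw [h0, sub_zero, sub_zero]
    exact div_nonpos_of_nonpos_of_nonneg (hle t ht1) (le_of_lt ht1)
  have : L - N x * N v ≤ 0 := le_of_tendsto hgw hslope
  linarith

end aux

/-- Negative-drift property of the generalized Moreau envelope `M = N²/2`
along a contraction `F̄` with fixed point `Q*`:
`DM(Q − Q*)[F̄(Q) − Q] ≤ −2(1 − (u/ℓ)γ̄) M(Q − Q*)`. -/
theorem stmt_13 {d : ℕ} (hd : 1 ≤ d)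
    (N : (Fin d → ℝ) → ℝ)
    (hN0 : ∀ x, 0 ≤ N x)
    (hNeq0 : ∀ x, N x = 0 ↔ x = 0)
    (hNsmul : ∀ (c : ℝ) (x : Fin d → ℝ), N (c • x) = |c| * N x)
    (hNadd : ∀ x y : Fin d → ℝ, N (x + y) ≤ N x + N y)
    (ℓ u : ℝ) (hℓ : 0 < ℓ) (hu : 0 < u)
    (hlow : ∀ x : Fin d → ℝ, ℓ * N x ≤ ‖x‖)
    (hupp : ∀ x : Fin d → ℝ, ‖x‖ ≤ u * N x)
    (hdiff : Differentiable ℝ (fun x : Fin d → ℝ => N x ^ 2 / 2))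
    (γbar : ℝ) (hγ0 : 0 ≤ γbar) (hγ1 : γbar < 1)
    (Fbar : (Fin d → ℝ) → (Fin d → ℝ))
    (hF : ∀ x y : Fin d → ℝ, ‖Fbar x - Fbar y‖ ≤ γbar * ‖x - y‖)
    (Qstar : Fin d → ℝ) (hfix : Fbar Qstar = Qstar)
    (Q : Fin d → ℝ) :
    fderiv ℝ (fun x : Fin d → ℝ => N x ^ 2 / 2) (Q - Qstar) (Fbar Q - Q) ≤
      -2 * (1 - u / ℓ * γbar) * (N (Q - Qstar) ^ 2 / 2) := by
  set x := Q - Qstar with hx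
  set w := Fbar Q - Fbar Qstar with hw
  have hsplit : Fbar Q - Q = w - x := by
    simp only [hw, hx, hfix]
    abel
  have hmap : fderiv ℝ (fun x : Fin d → ℝ => N x ^ 2 / 2) x (Fbar Q - Q)
      = fderiv ℝ (fun x : Fin d → ℝ => N x ^ 2 / 2) x w
        - fderiv ℝ (fun x : Fin d → ℝ => N x ^ 2 / 2) x x := by
    rw [hsplit, map_sub]
  have heuler := euler_aux N hNsmul hdiff x
  have hbd := deriv_bound_aux N hN0 hNsmul hNadd hdiff x w
  -- bound N w
  have hNw : ℓ * N w ≤ γbar * u * N x := by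
    calc ℓ * N w ≤ ‖w‖ := hlow w
      _ ≤ γbar * ‖Q - Qstar‖ := hF Q Qstar
      _ ≤ γbar * (u * N x) := by
          apply mul_le_mul_of_nonneg_left _ hγ0
          exact hupp x
      _ = γbar * u * N x := by ring
  have hNw' : N w ≤ γbar * u * N x / ℓ := by
    rw [le_div_iff₀ hℓ]; linarith
  have hstep : N x * N w ≤ u / ℓ * γbar * N x ^ 2 := by
    have := mul_le_mul_of_nonneg_left hNw' (hN0 x)
    calc N x * N w ≤ N x * (γbar * u * N x / ℓ) := this
      _ = u / ℓ * γbar * N x ^ 2 := by field_simp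
  rw [hmap, heuler]
  have : fderiv ℝ (fun x : Fin d → ℝ => N x ^ 2 / 2) x w ≤ u / ℓ * γbar * N x ^ 2 :=
    le_trans hbd hstep
  linarith
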